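/- Let θ* ∈ (0, π) and β ≥ 1. For z = (r cos θ, r cos(θ* − θ)) with r > 0 and θ ∈ (0, θ*), the mixed second partial derivative ∂²/∂z₁∂z₂ of c(z) = sin^{−β}(θ*) (z₁² + z₂² − 2 z₁ z₂ cos θ*)^{β/2} has the same sign as (β−2)/β · cos(θ* − 2θ) − cos(θ*). -/

import Mathlib

open Real

lemma sign_mul_pos' {p : ℝ} (hp : 0 < p) (x : ℝ) : Real.sign (p * x) = Real.sign x := by
  rcases lt_trichotomy x 0 with h | h | h
  · rw [Real.sign_of_neg h, Real.sign_of_neg (mul_neg_of_pos_of_neg hp h)]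
  · subst h; simp
  · rw [Real.sign_of_pos h, Real.sign_of_pos (mul_pos hp h)]

lemma hasDerivAt_Q (z₂ c x : ℝ) :
    HasDerivAt (fun z₁ : ℝ => z₁ ^ 2 + z₂ ^ 2 - 2 * z₁ * z₂ * c) (2 * x - 2 * z₂ * c) x := by
  have h := ((hasDerivAt_pow 2 x).add_const (z₂ ^ 2)).sub
    ((hasDerivAt_id x).const_mul (2 * z₂ * c))
  simp only [id_eq, pow_one, Nat.cast_ofNat] at h
  convert h using 2 with z₁ <;> first | rfl | (simp <;> ring)

lemma deriv_inner (K β c z₂ a : ℝ) (h : a ^ 2 + z₂ ^ 2 - 2 * a * z₂ * c ≠ 0) :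
    deriv (fun z₁ => K * (z₁ ^ 2 + z₂ ^ 2 - 2 * z₁ * z₂ * c) ^ (β / 2)) a
      = (K * (β / 2)) *
        ((a ^ 2 + z₂ ^ 2 - 2 * a * z₂ * c) ^ (β / 2 - 1) * (2 * a - 2 * z₂ * c)) := by
  have h1 := ((hasDerivAt_Q z₂ c a).rpow_const (p := β / 2) (Or.inl h)).const_mul K
  have h2 : HasDerivAt (fun z₁ => K * (z₁ ^ 2 + z₂ ^ 2 - 2 * z₁ * z₂ * c) ^ (β / 2))
      (K * ((2 * a - 2 * z₂ * c) * (β / 2) * (a ^ 2 + z₂ ^ 2 - 2 * a * z₂ * c) ^ (β / 2 - 1))) a :=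
    h1
  rw [h2.deriv]; ring

theorem stmt5 (θs β r θ : ℝ) (hθs : θs ∈ Set.Ioo 0 π) (hβ : 1 ≤ β)
    (hr : 0 < r) (hθ : θ ∈ Set.Ioo 0 θs) :
    Real.sign
        (deriv (fun z₂ => deriv (fun z₁ =>
            Real.sin θs ^ (-β) *
              (z₁ ^ 2 + z₂ ^ 2 - 2 * z₁ * z₂ * Real.cos θs) ^ (β / 2)) (r * Real.cos θ))
          (r * Real.cos (θs - θ)))
      = Real.sign ((β - 2) / β * Real.cos (θs - 2 * θ) - Real.cos θs) := by
  obtain ⟨hθs0, hθsπ⟩ := hθs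
  obtain ⟨hθ0, hθθs⟩ := hθ
  have hs1 : 0 < Real.sin θs := Real.sin_pos_of_pos_of_lt_pi hθs0 hθsπ
  have hβ0 : (0:ℝ) < β := by linarith
  set a : ℝ := r * Real.cos θ with ha
  set b : ℝ := r * Real.cos (θs - θ) with hb
  set c : ℝ := Real.cos θs with hc
  set K : ℝ := Real.sin θs ^ (-β) with hKdef
  have hK : 0 < K := Real.rpow_pos_of_pos hs1 _
  have hpy1 := Real.sin_sq_add_cos_sq θs
  have hpy2 := Real.sin_sq_add_cos_sq θ
  have hcs := Real.cos_sub θs θ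
  have hss := Real.sin_sub θs θ
  -- key algebraic facts
  have hQb : a ^ 2 + b ^ 2 - 2 * a * b * c = r ^ 2 * Real.sin θs ^ 2 := by
    rw [ha, hb, hc, hcs]
    linear_combination (r ^ 2 * Real.sin θs ^ 2) * hpy2 - (r ^ 2 * Real.cos θ ^ 2) * hpy1
  have habc : a - b * c = r * Real.sin θs * Real.sin (θs - θ) := by
    rw [ha, hb, hc, hcs, hss]
    linear_combination (-(r * Real.cos θ)) * hpy1
  have hbac : b - a * c = r * Real.sin θs * Real.sin θ := by
    rw [ha, hb, hc, hcs]; ring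
  have hQbpos : 0 < a ^ 2 + b ^ 2 - 2 * a * b * c := by
    rw [hQb]; positivity
  -- inner derivative, as a function of z₂, near b
  have hev : (fun z₂ => deriv (fun z₁ =>
        K * (z₁ ^ 2 + z₂ ^ 2 - 2 * z₁ * z₂ * c) ^ (β / 2)) a)
      =ᶠ[nhds b] fun z₂ => (K * (β / 2)) *
        ((a ^ 2 + z₂ ^ 2 - 2 * a * z₂ * c) ^ (β / 2 - 1) * (2 * a - 2 * z₂ * c)) := by
    have hcont : ContinuousAt (fun z₂ : ℝ => a ^ 2 + z₂ ^ 2 - 2 * a * z₂ * c) b := by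
      fun_prop
    filter_upwards [hcont.eventually (eventually_gt_nhds hQbpos)] with z₂ hz₂
    exact deriv_inner K β c z₂ a (ne_of_gt hz₂)
  rw [hev.deriv_eq]
  -- outer derivative
  have hQ2 : HasDerivAt (fun z₂ : ℝ => a ^ 2 + z₂ ^ 2 - 2 * a * z₂ * c) (2 * b - 2 * a * c) b := by
    have h := ((hasDerivAt_pow 2 b).add_const (a ^ 2)).sub
      ((hasDerivAt_id b).const_mul (2 * a * c))
    simp only [id_eq, pow_one, Nat.cast_ofNat] at h
    convert h using 2 with z₂ <;> first | rfl | (simp <;> ring)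
  have h1 := hQ2.rpow_const (p := β / 2 - 1) (Or.inl (ne_of_gt hQbpos))
  have h2 : HasDerivAt (fun z₂ : ℝ => 2 * a - 2 * z₂ * c) (-(2 * c)) b := by
    have h := ((hasDerivAt_id b).const_mul (2 * c)).const_sub (2 * a)
    simp only [id_eq] at h
    convert h using 2 with z₂ <;> first | rfl | (simp <;> ring)
  have h3 : HasDerivAt (fun z₂ => (K * (β / 2)) *
        ((a ^ 2 + z₂ ^ 2 - 2 * a * z₂ * c) ^ (β / 2 - 1) * (2 * a - 2 * z₂ * c)))
      ((K * (β / 2)) * ((2 * b - 2 * a * c) * (β / 2 - 1) *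
          (a ^ 2 + b ^ 2 - 2 * a * b * c) ^ (β / 2 - 1 - 1) * (2 * a - 2 * b * c)
        + (a ^ 2 + b ^ 2 - 2 * a * b * c) ^ (β / 2 - 1) * -(2 * c))) b :=
    (h1.mul h2).const_mul (K * (β / 2))
  rw [h3.deriv]
  -- now plain algebra with rpow values
  have hexp : β / 2 - 1 - 1 = β / 2 - 2 := by ring
  rw [hexp]
  set X : ℝ := (a ^ 2 + b ^ 2 - 2 * a * b * c) ^ (β / 2 - 2) with hX
  have hXpos : 0 < X := Real.rpow_pos_of_pos hQbpos _
  have hsplit : (a ^ 2 + b ^ 2 - 2 * a * b * c) ^ (β / 2 - 1)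
      = X * (a ^ 2 + b ^ 2 - 2 * a * b * c) := by
    rw [hX, ← Real.rpow_add_one (ne_of_gt hQbpos), show β / 2 - 2 + 1 = β / 2 - 1 by ring]
  have hD : (K * (β / 2)) * ((2 * b - 2 * a * c) * (β / 2 - 1) * X * (2 * a - 2 * b * c)
      + (a ^ 2 + b ^ 2 - 2 * a * b * c) ^ (β / 2 - 1) * -(2 * c))
      = (K * X * r ^ 2 * Real.sin θs ^ 2 * β) *
        ((β - 2) * Real.sin θ * Real.sin (θs - θ) - c) := by
    rw [hsplit, hQb]
    rw [show (2 * b - 2 * a * c) = 2 * (r * Real.sin θs * Real.sin θ) by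
      linear_combination 2 * hbac,
      show (2 * a - 2 * b * c) = 2 * (r * Real.sin θs * Real.sin (θs - θ)) by
      linear_combination 2 * habc]
    ring
  rw [hD]
  have hT : (β - 2) / β * Real.cos (θs - 2 * θ) - c
      = (2 / β) * ((β - 2) * Real.sin θ * Real.sin (θs - θ) - c) := by
    have h2θ : θs - 2 * θ = (θs - θ) - θ := by ring
    rw [h2θ, Real.cos_sub (θs - θ) θ, hss, hcs, hc]
    linear_combination ((β - 2) / β * Real.cos θs) * hpy2 +
      Real.cos θs * (mul_inv_cancel₀ (ne_of_gt hβ0))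
  rw [hT, sign_mul_pos' (by positivity) _, sign_mul_pos' (by positivity) _]
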